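/- Under the hypotheses of Theorem 1, if there exists a matrix Ũ with ℓ^t(Ũ) = 0 for all t, then the cumulative similarity loss satisfies Σ_{t=1}^∞ R^t ≤ F^2 ‖Ũ − W^1‖_F^2; in particular the cumulative loss is bounded by a constant independent of the number of rounds. -/

import Mathlib

/-- Under the hypotheses of Theorem 1, if there exists a
comparator `Ũ` with `ℓ^t(Ũ) = 0` for all `t`, then every partial sum of the
cumulative similarity loss is bounded by the constant `F²‖Ũ − W^1‖_F²`,
independent of the number of rounds. -/
theorem stmt_10 (d r : ℕ)
    (xi xj : ℕ → Fin d → ℝ) (hi hj gi gj : ℕ → Fin r → ℝ)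
    (R : ℕ → ℝ) (hR : ∀ t, 0 ≤ R t)
    (H G ℓ : ℕ → Matrix (Fin d) (Fin r) ℝ → ℝ)
    (hH : ∀ t W, H t W = ∑ i, ∑ k, W i k * (xi t i * hi t k + xj t i * hj t k))
    (hG : ∀ t W, G t W = ∑ i, ∑ k, W i k * (xi t i * gi t k + xj t i * gj t k))
    (hℓ : ∀ t W, ℓ t W = H t W - G t W + Real.sqrt (R t))
    (A : ℕ → Matrix (Fin d) (Fin r) ℝ)
    (hA : ∀ t i k, A t i k = xi t i * (gi t k - hi t k) + xj t i * (gj t k - hj t k))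
    (F C : ℝ) (hF : 0 < F) (hC : 0 < C)
    (hAb : ∀ t, 0 < ∑ i, ∑ k, (A t i k) ^ 2)
    (hAF : ∀ t, (∑ i, ∑ k, (A t i k) ^ 2) ≤ F ^ 2)
    (hCb : ∀ t, Real.sqrt (R t) / F ^ 2 ≤ C)
    (W : ℕ → Matrix (Fin d) (Fin r) ℝ)
    (τ : ℕ → ℝ)
    (hτ : ∀ t, τ t = min C (ℓ t (W t) / ∑ i, ∑ k, (A t i k) ^ 2))
    (hupd : ∀ t, W (t + 1) = W t + τ t • A t)
    (hℓW : ∀ t, Real.sqrt (R t) ≤ ℓ t (W t))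
    (Utilde : Matrix (Fin d) (Fin r) ℝ) (hU0 : ∀ t, ℓ t Utilde = 0) :
    ∀ n : ℕ,
      ∑ t ∈ Finset.range n, R t ≤
        F ^ 2 * ∑ i, ∑ k, (Utilde i k - W 0 i k) ^ 2 := by
  have hF2 : (0:ℝ) < F ^ 2 := by positivity
  set S : ℕ → ℝ := fun t => ∑ i, ∑ k, (A t i k) ^ 2 with hS
  set φ : ℕ → ℝ := fun n => ∑ i, ∑ k, (W n i k - Utilde i k) ^ 2 with hφ
  have hφ0 : ∀ n, 0 ≤ φ n := by
    intro n; apply Finset.sum_nonneg; intro i _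
    exact Finset.sum_nonneg fun k _ => sq_nonneg _
  have hsqrt : ∀ t, 0 ≤ Real.sqrt (R t) := fun t => Real.sqrt_nonneg _
  have hℓ0 : ∀ t, 0 ≤ ℓ t (W t) := fun t => le_trans (hsqrt t) (hℓW t)
  have hτ0 : ∀ t, 0 ≤ τ t := by
    intro t; rw [hτ t]
    exact le_min hC.le (div_nonneg (hℓ0 t) (hAb t).le)
  have hinner : ∀ t (M : Matrix (Fin d) (Fin r) ℝ),
      ∑ i, ∑ k, M i k * A t i k = G t M - H t M := by
    intro t M
    rw [hG, hH, ← Finset.sum_sub_distrib]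
    refine Finset.sum_congr rfl fun i _ => ?_
    rw [← Finset.sum_sub_distrib]
    refine Finset.sum_congr rfl fun k _ => ?_
    rw [hA]; ring
  have hipW : ∀ t, ∑ i, ∑ k, (W t i k - Utilde i k) * A t i k = - ℓ t (W t) := by
    intro t
    have h1 : ∑ i, ∑ k, (W t i k - Utilde i k) * A t i k
        = (∑ i, ∑ k, W t i k * A t i k) - ∑ i, ∑ k, Utilde i k * A t i k := by
      rw [← Finset.sum_sub_distrib]
      refine Finset.sum_congr rfl fun i _ => ?_
      rw [← Finset.sum_sub_distrib]
      exact Finset.sum_congr rfl fun k _ => by ring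
    have hU0t := hU0 t
    rw [hℓ t Utilde] at hU0t
    have e1 : G t (W t) - H t (W t) = Real.sqrt (R t) - ℓ t (W t) := by
      rw [hℓ t (W t)]; ring
    have e2 : G t Utilde - H t Utilde = Real.sqrt (R t) := by linarith
    rw [h1, hinner t (W t), hinner t Utilde, e1, e2]; ring
  have hstep : ∀ t, φ (t + 1) = φ t - 2 * τ t * ℓ t (W t) + (τ t) ^ 2 * S t := by
    intro t
    have hx : φ (t + 1)
        = φ t + 2 * τ t * (∑ i, ∑ k, (W t i k - Utilde i k) * A t i k)
          + (τ t) ^ 2 * S t := by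
      simp only [hφ, hS]
      rw [Finset.mul_sum, Finset.mul_sum, ← Finset.sum_add_distrib, ← Finset.sum_add_distrib]
      refine Finset.sum_congr rfl fun i _ => ?_
      rw [Finset.mul_sum, Finset.mul_sum, ← Finset.sum_add_distrib, ← Finset.sum_add_distrib]
      refine Finset.sum_congr rfl fun k _ => ?_
      rw [hupd t]
      simp only [Matrix.add_apply, Matrix.smul_apply, smul_eq_mul]
      ring
    rw [hx, hipW t]; ring
  have hdec : ∀ t, R t / F ^ 2 ≤ φ t - φ (t + 1) := by
    intro t
    have hSt := hAb t
    have hτle : τ t * S t ≤ ℓ t (W t) := by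
      have h1 : τ t ≤ ℓ t (W t) / S t := by rw [hτ t]; exact min_le_right _ _
      calc τ t * S t ≤ (ℓ t (W t) / S t) * S t :=
            mul_le_mul_of_nonneg_right h1 hSt.le
        _ = ℓ t (W t) := by exact div_mul_cancel₀ _ hSt.ne'
    have hτge : Real.sqrt (R t) / F ^ 2 ≤ τ t := by
      rw [hτ t]
      refine le_min (hCb t) ?_
      have h1 : Real.sqrt (R t) / F ^ 2 ≤ Real.sqrt (R t) / S t :=
        div_le_div_of_nonneg_left (hsqrt t) (hAb t) (hAF t)
      have h2 : Real.sqrt (R t) / S t ≤ ℓ t (W t) / S t := by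
        gcongr
        exact hℓW t
      linarith
    have key : R t / F ^ 2 ≤ τ t * ℓ t (W t) - (τ t) ^ 2 * S t + τ t * ℓ t (W t) := by
      have h1 : (τ t) ^ 2 * S t ≤ τ t * ℓ t (W t) := by
        have := mul_le_mul_of_nonneg_left hτle (hτ0 t)
        nlinarith [hτ0 t]
      have h2 : Real.sqrt (R t) / F ^ 2 * Real.sqrt (R t) ≤ τ t * Real.sqrt (R t) :=
        mul_le_mul_of_nonneg_right hτge (hsqrt t)
      have h3 : Real.sqrt (R t) * Real.sqrt (R t) = R t := Real.mul_self_sqrt (hR t)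
      have h4 : τ t * Real.sqrt (R t) ≤ τ t * ℓ t (W t) :=
        mul_le_mul_of_nonneg_left (hℓW t) (hτ0 t)
      have h5 : R t / F ^ 2 = Real.sqrt (R t) / F ^ 2 * Real.sqrt (R t) := by
        field_simp; linarith [h3]
      linarith
    have := hstep t
    linarith
  have hsum : ∀ n, ∑ t ∈ Finset.range n, R t / F ^ 2 ≤ φ 0 - φ n := by
    intro n
    induction n with
    | zero => simp
    | succ m ih =>
      rw [Finset.sum_range_succ]
      have := hdec m
      linarith
  intro n
  have h1 := hsum n
  have h2 := hφ0 n
  have h3 : ∑ t ∈ Finset.range n, R t / F ^ 2 = (∑ t ∈ Finset.range n, R t) / F ^ 2 := by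
    rw [Finset.sum_div]
  have h4 : (∑ t ∈ Finset.range n, R t) / F ^ 2 ≤ φ 0 := by
    rw [← h3]; linarith
  have h5 : ∑ t ∈ Finset.range n, R t ≤ F ^ 2 * φ 0 := by
    rw [div_le_iff₀ hF2] at h4; linarith
  have h6 : φ 0 = ∑ i, ∑ k, (Utilde i k - W 0 i k) ^ 2 := by
    simp only [hφ]
    refine Finset.sum_congr rfl fun i _ => Finset.sum_congr rfl fun k _ => ?_
    ring
  rw [← h6]; exact h5
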